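/- Every smooth vector field on a compact smooth manifold without boundary is complete: if M is a compact smooth manifold without boundary and v is a smooth section of the tangent bundle of M, then for every x₀ ∈ M there exists a curve γ : ℝ → M with γ(0) = x₀ which is an integral curve of v on all of ℝ, i.e. for every t ∈ ℝ the derivative of γ at t equals v(γ(t)). -/

import Mathlib

open Bundle Set Function Metric
open scoped Manifold Topology NNReal


/-- Picard–Lindelöf, also recording that the solution stays in the closed ball. -/
theorem my_exists_solution_mem_closedBall {E : Type*} [NormedAddCommGroup E] [NormedSpace ℝ E]
    [CompleteSpace E] {v : ℝ → E → E}
    {tMin tMax : ℝ} {t₀ : Icc tMin tMax} (x₀ : E) {a L K : ℝ≥0}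
    (hpl : IsPicardLindelof v t₀ x₀ a 0 L K) :
    ∃ f : ℝ → E, f t₀ = x₀ ∧ (∀ t ∈ Icc tMin tMax, f t ∈ closedBall x₀ a) ∧
      ∀ t ∈ Icc tMin tMax, HasDerivWithinAt f (v t (f t)) (Icc tMin tMax) t := by
  have hx : x₀ ∈ closedBall x₀ (0 : ℝ≥0) := mem_closedBall_self le_rfl
  obtain ⟨α, hα⟩ := ODE.FunSpace.exists_isFixedPt_next hpl hx
  refine ⟨α.compProj, by rw [ODE.FunSpace.compProj_val, ← hα, ODE.FunSpace.next_apply₀],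
    fun t _ => α.compProj_mem_closedBall hpl.mul_max_le, fun t ht ↦ ?_⟩
  apply ODE.hasDerivWithinAt_picard_Icc t₀.2 hpl.continuousOn_uncurry
    α.continuous_compProj.continuousOn (fun _ ht' ↦ α.compProj_mem_closedBall hpl.mul_max_le)
    x₀ ht |>.congr_of_mem _ ht
  intro t' ht'
  nth_rw 1 [← hα]
  rw [ODE.FunSpace.compProj_of_mem ht', ODE.FunSpace.next_apply]

theorem my_local_uniform
    {E : Type*} [NormedAddCommGroup E] [NormedSpace ℝ E] [CompleteSpace E]
    {M : Type*} [TopologicalSpace M] [ChartedSpace E M]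
    [IsManifold 𝓘(ℝ, E) (⊤ : ℕ∞) M]
    (v : (x : M) → TangentSpace 𝓘(ℝ, E) x)
    (hv : ContMDiff 𝓘(ℝ, E) 𝓘(ℝ, E).tangent 1
      (fun x => (⟨x, v x⟩ : TangentBundle 𝓘(ℝ, E) M))) (x₀ : M) :
    ∃ ε > (0:ℝ), ∃ U ∈ 𝓝 x₀, ∀ x ∈ U,
      ∃ γ : ℝ → M, γ 0 = x ∧ IsMIntegralCurveOn γ v (Ioo (-ε) ε) := by
  set e := extChartAt 𝓘(ℝ, E) x₀ with he
  set v' : E → E := fun y ↦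
    tangentCoordChange 𝓘(ℝ, E) (e.symm y) x₀ (e.symm y) (v (e.symm y)) with hv'def
  have hv' := hv x₀
  rw [contMDiffAt_iff] at hv'
  obtain ⟨_, hv'⟩ := hv'
  obtain ⟨K, s, hs, hlip⟩ : ∃ K, ∃ s ∈ 𝓝 (e x₀), LipschitzOnWith K v' s :=
    (hv'.contDiffAt (range_mem_nhds_isInteriorPoint
      (BoundarylessManifold.isInteriorPoint))).snd.exists_lipschitzOnWith
  have hmem : s ∩ e.target ∈ 𝓝 (e x₀) :=
    Filter.inter_mem hs (extChartAt_target_mem_nhds x₀)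
  obtain ⟨R, hR0, hRsub⟩ := Metric.nhds_basis_closedBall.mem_iff.mp hmem
  set C : ℝ := ‖v' (e x₀)‖ + K * R with hC
  have hC0 : 0 ≤ C := by positivity
  have hbound : ∀ y ∈ closedBall (e x₀) R, ‖v' y‖ ≤ C := by
    intro y hy
    have h1 : dist (v' y) (v' (e x₀)) ≤ K * dist y (e x₀) :=
      hlip.dist_le_mul y (hRsub hy).1 (e x₀) (hRsub (mem_closedBall_self hR0.le)).1
    have h2 : dist y (e x₀) ≤ R := mem_closedBall.mp hy
    have := norm_le_norm_add_norm_sub' (v' y) (v' (e x₀))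
    rw [← dist_eq_norm'] at this
    calc ‖v' y‖ ≤ ‖v' (e x₀)‖ + dist (v' y) (v' (e x₀)) := by
          rw [dist_comm] at this; exact this
      _ ≤ ‖v' (e x₀)‖ + K * R := by
          refine add_le_add le_rfl (h1.trans ?_)
          exact mul_le_mul_of_nonneg_left h2 K.2
  set ε : ℝ := (R / 2) / (C + 1) with hε
  have hε0 : 0 < ε := by positivity
  refine ⟨ε, hε0, e.source ∩ e ⁻¹' (closedBall (e x₀) (R / 2)), ?_, ?_⟩
  · exact Filter.inter_mem (extChartAt_source_mem_nhds x₀)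
      ((continuousAt_extChartAt x₀).preimage_mem_nhds
        (closedBall_mem_nhds _ (by positivity)))
  intro x hx
  set y₀ : E := e x with hy₀
  have hy₀mem : y₀ ∈ closedBall (e x₀) (R / 2) := hx.2
  have hball : closedBall y₀ (R / 2) ⊆ closedBall (e x₀) R := by
    apply closedBall_subset_closedBall'
    have := mem_closedBall.mp hy₀mem
    linarith
  have hpl : IsPicardLindelof (fun _ ↦ v') (tmin := -ε) (tmax := ε)
      ⟨0, ⟨neg_nonpos.mpr hε0.le, hε0.le⟩⟩ y₀ ⟨R / 2, by positivity⟩ 0 ⟨C + 1, by positivity⟩ K :=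
    { lipschitzOnWith := fun t _ ↦ hlip.mono (hball.trans (fun y hy ↦ (hRsub hy).1))
      continuousOn := fun _ _ ↦ continuousOn_const
      norm_le := fun t _ y hy ↦ (hbound y (hball hy)).trans (by show C ≤ C + 1; linarith)
      mul_max_le := by
        show (C + 1) * max (ε - 0) (0 - (-ε)) ≤ R / 2 - 0
        have hC1 : C + 1 ≠ 0 := by positivity
        rw [sub_zero, sub_zero, zero_sub, neg_neg, max_self, hε]
        exact le_of_eq (by field_simp) }
  obtain ⟨f, hf0, hfmem, hfderiv⟩ := my_exists_solution_mem_closedBall y₀ hpl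
  refine ⟨e.symm ∘ f, by
    have hf0' : f 0 = y₀ := hf0
    simp only [Function.comp_apply, hf0', hy₀]
    exact e.left_inv hx.1, ?_⟩
  intro t ht
  refine HasMFDerivAt.hasMFDerivWithinAt ?_
  have htIcc : t ∈ Icc (-ε) ε := Ioo_subset_Icc_self ht
  have hf3' : f t ∈ e.target := (hRsub (hball (hfmem t htIcc))).2
  have hfs : f t ∈ s := (hRsub (hball (hfmem t htIcc))).1
  have hf3 : f t ∈ interior e.target := by
    rwa [(isOpen_extChartAt_target x₀).interior_eq]
  have h : HasDerivAt f (v' (f t)) t :=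
    (hfderiv t htIcc).hasDerivAt (Icc_mem_nhds ht.1 ht.2)
  set xₜ : M := e.symm (f t) with hxₜ
  rw [hv'def] at h
  have hft1 := mem_preimage.mp <|
    mem_of_mem_of_subset hf3' e.target_subset_preimage_source
  have hft2 := mem_extChartAt_source (I := 𝓘(ℝ, E)) xₜ
  refine ⟨(continuousAt_extChartAt_symm'' hf3').comp h.continuousAt, ?_⟩
  show HasFDerivWithinAt (𝕜 := ℝ) (F := E) _ ((1 : ℝ →L[ℝ] ℝ).smulRight (v xₜ : E)) _ _
  apply HasDerivWithinAt.hasFDerivWithinAt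
  simp only [mfld_simps, hasDerivWithinAt_univ]
  show HasDerivWithinAt ((extChartAt 𝓘(ℝ, E) xₜ ∘ e.symm) ∘ f) (v xₜ : E) univ t
  refine hasDerivWithinAt_univ.mpr ?_
  show HasDerivAt ((extChartAt 𝓘(ℝ, E) xₜ ∘ e.symm) ∘ f) (v xₜ) t
  set w : E := v xₜ with hw
  have hvx : w = tangentCoordChange 𝓘(ℝ, E) x₀ xₜ xₜ
      (tangentCoordChange 𝓘(ℝ, E) xₜ x₀ xₜ w) :=
    ((tangentCoordChange_comp (v := w) ⟨⟨hft2, hft1⟩, hft2⟩).trans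
      (tangentCoordChange_self hft2)).symm
  refine HasDerivAt.congr_deriv ?_ hvx.symm
  apply HasFDerivAt.comp_hasDerivAt _ _ h
  apply HasFDerivWithinAt.hasFDerivAt (s := Set.range (𝓘(ℝ, E))) _ <|
    mem_nhds_iff.mpr ⟨interior e.target,
      subset_trans interior_subset (extChartAt_target_subset_range ..),
      isOpen_interior, hf3⟩
  rw [← e.right_inv hf3']
  exact hasFDerivWithinAt_tangentCoordChange ⟨hft1, hft2⟩


/-- Every smooth vector field on a compact smooth manifold without boundary is complete:
through every point there is an integral curve of the vector field defined on all of `ℝ`. -/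
theorem vector_field_on_compact_manifold_complete
    {E : Type*} [NormedAddCommGroup E] [NormedSpace ℝ E] [FiniteDimensional ℝ E]
    {M : Type*} [TopologicalSpace M] [ChartedSpace E M]
    [IsManifold 𝓘(ℝ, E) (⊤ : ℕ∞) M] [T2Space M] [SecondCountableTopology M]
    [CompactSpace M]
    (v : (x : M) → TangentSpace 𝓘(ℝ, E) x)
    (hv : ContMDiff 𝓘(ℝ, E) 𝓘(ℝ, E).tangent (⊤ : ℕ∞)
      (fun x => (TotalSpace.mk x (v x) : TangentBundle 𝓘(ℝ, E) M))) :
    ∀ x₀ : M, ∃ γ : ℝ → M, γ 0 = x₀ ∧ IsMIntegralCurve γ v := by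
  intro x₀
  have hv1 : ContMDiff 𝓘(ℝ, E) 𝓘(ℝ, E).tangent 1
      (fun x => (⟨x, v x⟩ : TangentBundle 𝓘(ℝ, E) M)) := hv.of_le (by exact_mod_cast le_top)
  choose ε hε U hU h using fun x => my_local_uniform v hv1 x
  obtain ⟨t, ht⟩ := IsCompact.elim_nhds_subcover isCompact_univ U (fun x _ => hU x)
  have hx₀ : x₀ ∈ ⋃ x ∈ t, U x := ht.2 (mem_univ x₀)
  obtain ⟨i₀, hi₀, -⟩ := Set.mem_iUnion₂.mp hx₀
  have htne : t.Nonempty := ⟨i₀, hi₀⟩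
  set ε₀ : ℝ := t.inf' htne ε with hε₀def
  have hε₀ : 0 < ε₀ := (Finset.lt_inf'_iff htne).mpr fun x _ => hε x
  refine exists_isMIntegralCurve_of_isMIntegralCurveOn hv1 hε₀ (fun x => ?_) x₀
  obtain ⟨i, hi, hxU⟩ := Set.mem_iUnion₂.mp (ht.2 (mem_univ x))
  obtain ⟨γ, h1, h2⟩ := h i x hxU
  exact ⟨γ, h1, h2.mono (Ioo_subset_Ioo
    (neg_le_neg (Finset.inf'_le ε hi)) (Finset.inf'_le ε hi))⟩
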